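/- Let (T1, B1, E1) and (T2, B2, E2) be regular generalized boundary problems with T1 : V → W and T2 : U → V surjective K-linear maps, B1 ≤ V* and B2 ≤ U* finite-dimensional, and let G1 and G2 be their generalized Green's operators. Then G2 ∘ G1 is an outer inverse of T1 ∘ T2 if and only if the composite problem (T1, B1, E1) ∘ (T2, B2, E2) = (T1∘T2, B2 + T2*(B1 ∩ E2⊥), E1 + T1(B1⊥ ∩ E2)) is regular and its generalized Green's operator equals G2 ∘ G1. -/

import Mathlib

theorem aux_dualAnn_dualCoann {K V : Type*} [Field K] [AddCommGroup V] [Module K V]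
    (B : Submodule K (Module.Dual K V)) [FiniteDimensional K B] :
    B.dualCoannihilator.dualAnnihilator = B := by
  refine le_antisymm (fun γ hγ => ?_) (Submodule.le_dualCoannihilator_dualAnnihilator B)
  haveI : Module.Free K B := Module.Free.of_divisionRing K B
  let b := Module.finBasis K B
  let L : Fin (Module.finrank K B) → (V →ₗ[K] K) := fun i => (b i : Module.Dual K V)
  have hspan : Submodule.span K (Set.range L) = B := by
    have : Submodule.span K (Set.range L) = Submodule.map B.subtype (Submodule.span K (Set.range b)) := by
      rw [Submodule.map_span]
      congr 1
      ext x
      simp [L, Set.range_comp]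
    rw [this, b.span_eq, Submodule.map_top, Submodule.range_subtype]
  have hker : (⨅ i, LinearMap.ker (L i)) ≤ LinearMap.ker γ := by
    intro x hx
    have hxc : x ∈ B.dualCoannihilator := by
      rw [← hspan]
      have := Submodule.coe_dualCoannihilator_span (R := K) (M := V) (Set.range L)
      rw [← SetLike.mem_coe, this]
      rintro f ⟨i, rfl⟩
      simpa using (Submodule.mem_iInf _).1 hx i
    rw [Submodule.mem_dualAnnihilator] at hγ
    exact hγ x hxc
  have := mem_span_of_iInf_ker_le_ker hker
  rwa [hspan] at this

theorem stmt_6 {K U V W : Type*} [Field K]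
    [AddCommGroup U] [Module K U] [AddCommGroup V] [Module K V]
    [AddCommGroup W] [Module K W]
    (T1 : V →ₗ[K] W) (T2 : U →ₗ[K] V)
    (hT1 : Function.Surjective T1) (hT2 : Function.Surjective T2)
    (B1 : Submodule K (Module.Dual K V)) (B2 : Submodule K (Module.Dual K U))
    [FiniteDimensional K B1] [FiniteDimensional K B2]
    (E1 : Submodule K W) (E2 : Submodule K V)
    (hsemi1 : LinearMap.ker T1 ⊓ B1.dualCoannihilator = ⊥)
    (hreg1 : IsCompl (Submodule.map T1 B1.dualCoannihilator) E1)
    (hsemi2 : LinearMap.ker T2 ⊓ B2.dualCoannihilator = ⊥)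
    (hreg2 : IsCompl (Submodule.map T2 B2.dualCoannihilator) E2)
    (Q1 : W →ₗ[K] W) (hQ1 : Q1 ∘ₗ Q1 = Q1)
    (hQ1range : LinearMap.range Q1 = Submodule.map T1 B1.dualCoannihilator)
    (hQ1ker : LinearMap.ker Q1 = E1)
    (Q2 : V →ₗ[K] V) (hQ2 : Q2 ∘ₗ Q2 = Q2)
    (hQ2range : LinearMap.range Q2 = Submodule.map T2 B2.dualCoannihilator)
    (hQ2ker : LinearMap.ker Q2 = E2)
    (G1 : W →ₗ[K] V)
    (hG1 : ∀ f : W, G1 f ∈ B1.dualCoannihilator ∧ T1 (G1 f) = Q1 f)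
    (G2 : V →ₗ[K] U)
    (hG2 : ∀ f : V, G2 f ∈ B2.dualCoannihilator ∧ T2 (G2 f) = Q2 f) :
    ((G2 ∘ₗ G1) ∘ₗ (T1 ∘ₗ T2) ∘ₗ (G2 ∘ₗ G1) = G2 ∘ₗ G1) ↔
      ((LinearMap.ker (T1 ∘ₗ T2) ⊓
          (B2 ⊔ Submodule.map T2.dualMap (B1 ⊓ E2.dualAnnihilator)).dualCoannihilator = ⊥) ∧
        IsCompl
          (Submodule.map (T1 ∘ₗ T2)
            (B2 ⊔ Submodule.map T2.dualMap (B1 ⊓ E2.dualAnnihilator)).dualCoannihilator)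
          (E1 ⊔ Submodule.map T1 (B1.dualCoannihilator ⊓ E2)) ∧
        (∀ Q : W →ₗ[K] W, Q ∘ₗ Q = Q →
          LinearMap.range Q = Submodule.map (T1 ∘ₗ T2)
            (B2 ⊔ Submodule.map T2.dualMap (B1 ⊓ E2.dualAnnihilator)).dualCoannihilator →
          LinearMap.ker Q = E1 ⊔ Submodule.map T1 (B1.dualCoannihilator ⊓ E2) →
          ∀ f : W,
            (G2 ∘ₗ G1) f ∈
              (B2 ⊔ Submodule.map T2.dualMap (B1 ⊓ E2.dualAnnihilator)).dualCoannihilator ∧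
            (T1 ∘ₗ T2) ((G2 ∘ₗ G1) f) = Q f)) := by
  classical
  set Bb : Submodule K (Module.Dual K U) :=
    B2 ⊔ Submodule.map T2.dualMap (B1 ⊓ E2.dualAnnihilator) with hBb
  set Ee : Submodule K W := E1 ⊔ Submodule.map T1 (B1.dualCoannihilator ⊓ E2) with hEe
  have hQ1f : ∀ x, Q1 (Q1 x) = Q1 x := fun x => LinearMap.congr_fun hQ1 x
  have hQ2f : ∀ x, Q2 (Q2 x) = Q2 x := fun x => LinearMap.congr_fun hQ2 x
  have hsub2 : ∀ x : V, x - Q2 x ∈ E2 := by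
    intro x
    rw [← hQ2ker, LinearMap.mem_ker, map_sub, hQ2f, sub_self]
  have hker1 : ∀ x : V, T1 x = 0 → x ∈ B1.dualCoannihilator → x = 0 := by
    intro x h1 h2
    have : x ∈ LinearMap.ker T1 ⊓ B1.dualCoannihilator := ⟨h1, h2⟩
    rwa [hsemi1, Submodule.mem_bot] at this
  have hker2 : ∀ x : U, T2 x = 0 → x ∈ B2.dualCoannihilator → x = 0 := by
    intro x h1 h2
    have : x ∈ LinearMap.ker T2 ⊓ B2.dualCoannihilator := ⟨h1, h2⟩
    rwa [hsemi2, Submodule.mem_bot] at this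
  have hG1T1 : ∀ u ∈ B1.dualCoannihilator, G1 (T1 u) = u := by
    intro u hu
    have h1 := hG1 (T1 u)
    have hT1u : T1 u ∈ LinearMap.range Q1 := by
      rw [hQ1range]; exact Submodule.mem_map_of_mem hu
    obtain ⟨y, hy⟩ := hT1u
    have hQfix : Q1 (T1 u) = T1 u := by rw [← hy, hQ1f]
    have hT : T1 (G1 (T1 u) - u) = 0 := by rw [map_sub, h1.2, hQfix, sub_self]
    exact sub_eq_zero.mp (hker1 _ hT (Submodule.sub_mem _ h1.1 hu))
  have hG2T2 : ∀ u ∈ B2.dualCoannihilator, G2 (T2 u) = u := by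
    intro u hu
    have h1 := hG2 (T2 u)
    have hT2u : T2 u ∈ LinearMap.range Q2 := by
      rw [hQ2range]; exact Submodule.mem_map_of_mem hu
    obtain ⟨y, hy⟩ := hT2u
    have hQfix : Q2 (T2 u) = T2 u := by rw [← hy, hQ2f]
    have hT : T2 (G2 (T2 u) - u) = 0 := by rw [map_sub, h1.2, hQfix, sub_self]
    exact sub_eq_zero.mp (hker2 _ hT (Submodule.sub_mem _ h1.1 hu))
  have hG1E1 : ∀ e ∈ E1, G1 e = 0 := by
    intro e he
    have h1 := hG1 e
    have hQe : Q1 e = 0 := by rw [← hQ1ker] at he; exact he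
    exact hker1 _ (by rw [h1.2, hQe]) h1.1
  -- membership of range of G2∘G1 in Bb⊥
  have memB : ∀ x ∈ B1.dualCoannihilator, G2 x ∈ Bb.dualCoannihilator := by
    intro x hx
    rw [Submodule.mem_dualCoannihilator]
    intro β hβ
    rw [hBb] at hβ
    obtain ⟨β2, hβ2, γ', hγ', rfl⟩ := Submodule.mem_sup.1 hβ
    obtain ⟨γ, hγ, rfl⟩ := hγ'
    have h2 : β2 (G2 x) = 0 := by
      have := (hG2 x).1
      rw [Submodule.mem_dualCoannihilator] at this
      exact this β2 hβ2
    have h3 : γ (T2 (G2 x)) = 0 := by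
      rw [(hG2 x).2]
      have hγ' : γ ∈ B1 ⊓ E2.dualAnnihilator := hγ
      have hγx : γ x = 0 := by
        rw [Submodule.mem_dualCoannihilator] at hx
        exact hx γ hγ'.1
      have hγe : γ (x - Q2 x) = 0 :=
        (Submodule.mem_dualAnnihilator _).1 hγ'.2 _ (hsub2 x)
      have : γ (Q2 x) = γ x - γ (x - Q2 x) := by rw [map_sub]; ring
      rw [this, hγx, hγe, sub_zero]
    simp only [LinearMap.add_apply, LinearMap.dualMap_apply, h2, h3, add_zero]
  have memB' : ∀ f : W, G2 (G1 f) ∈ Bb.dualCoannihilator := fun f => memB _ (hG1 f).1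
  -- the annihilator decomposition
  have hdecomp : (B1 ⊓ E2.dualAnnihilator).dualCoannihilator ≤ B1.dualCoannihilator ⊔ E2 := by
    have h1 : (B1.dualCoannihilator ⊔ E2).dualAnnihilator = B1 ⊓ E2.dualAnnihilator := by
      rw [Submodule.dualAnnihilator_sup_eq, aux_dualAnn_dualCoann]
    have h2 : (B1 ⊓ E2.dualAnnihilator).dualCoannihilator = B1.dualCoannihilator ⊔ E2 := by
      conv_lhs => rw [← h1]
      exact Subspace.dualAnnihilator_dualCoannihilator_eq
    exact h2.le
  constructor
  · -- forward
    intro hO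
    have hOf : ∀ f : W, G2 (G1 (T1 (T2 (G2 (G1 f))))) = G2 (G1 f) := by
      intro f
      have := LinearMap.congr_fun hO f
      simpa using this
    have key : ∀ v ∈ B1.dualCoannihilator, Q2 (G1 (T1 (v - Q2 v))) = 0 := by
      intro v hv
      have hvf : G1 (T1 v) = v := hG1T1 v hv
      have h := hOf (T1 v)
      rw [hvf, (hG2 v).2] at h
      -- h : G2 (G1 (T1 (Q2 v))) = G2 v
      have h2 : Q2 (G1 (T1 (Q2 v))) = Q2 v := by
        have := congrArg T2 h
        rwa [(hG2 _).2, (hG2 _).2] at this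
      have h3 : G1 (T1 (Q2 v)) = v - G1 (T1 (v - Q2 v)) := by
        have h3' : G1 (T1 (v - Q2 v)) = v - G1 (T1 (Q2 v)) := by
          rw [map_sub, map_sub, hvf]
        rw [h3']
        abel
      have h4 : Q2 v - Q2 (G1 (T1 (v - Q2 v))) = Q2 v := by
        rw [← map_sub, ← h3, h2]
      exact sub_eq_self.mp h4
    -- every element of Bb⊥ is recovered by G2 G1 from T1 T2
    have hBcle : ∀ u ∈ Bb.dualCoannihilator, G2 (G1 (T1 (T2 u))) = u := by
      intro u hu
      have hu2 : u ∈ B2.dualCoannihilator :=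
        Submodule.dualCoannihilator_anti le_sup_left hu
      have hT2u : T2 u ∈ (B1 ⊓ E2.dualAnnihilator).dualCoannihilator := by
        rw [Submodule.mem_dualCoannihilator]
        intro γ hγ
        have hmem : T2.dualMap γ ∈ Bb := by
          rw [hBb]
          exact Submodule.mem_sup_right (Submodule.mem_map_of_mem hγ)
        have := (Submodule.mem_dualCoannihilator _).1 hu _ hmem
        simpa using this
      obtain ⟨a, ha, e, he, hae⟩ := Submodule.mem_sup.1 (hdecomp hT2u)
      have hQ2T2u : Q2 (T2 u) = T2 u := by
        have : T2 u ∈ LinearMap.range Q2 := by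
          rw [hQ2range]; exact Submodule.mem_map_of_mem hu2
        obtain ⟨y, hy⟩ := this
        rw [← hy, hQ2f]
      have hQe : Q2 e = 0 := by rw [← hQ2ker] at he; exact he
      have hQa : Q2 a = T2 u := by
        have : Q2 a + Q2 e = Q2 (T2 u) := by rw [← map_add, hae]
        rw [hQe, add_zero, hQ2T2u] at this
        exact this
      have heq : e = -(a - Q2 a) := by
        rw [hQa]
        have : a + e = T2 u := hae
        abel_nf
        linear_combination (norm := abel) this
      have hkey : Q2 (G1 (T1 e)) = 0 := by
        rw [heq, map_neg, map_neg, map_neg, key a ha, neg_zero]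
      have hG1comp : G1 (T1 (T2 u)) = a + G1 (T1 e) := by
        rw [← hae, map_add, map_add, hG1T1 a ha]
      have hmem2 : G2 (G1 (T1 (T2 u))) - u ∈ B2.dualCoannihilator :=
        Submodule.sub_mem _ (hG2 _).1 hu2
      have hT2eq : T2 (G2 (G1 (T1 (T2 u))) - u) = 0 := by
        rw [map_sub, (hG2 _).2, hG1comp, map_add, hkey, add_zero, hQa, sub_self]
      exact sub_eq_zero.mp (hker2 _ hT2eq hmem2)
    refine ⟨?_, ?_, ?_⟩
    · -- ker ∩ Bb⊥ = ⊥
      rw [eq_bot_iff]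
      rintro x ⟨hx1, hx2⟩
      have hx1' : T1 (T2 x) = 0 := hx1
      have := hBcle x hx2
      rw [hx1'] at this
      simpa using this.symm
    · -- IsCompl
      have rangeP : LinearMap.range ((T1 ∘ₗ T2) ∘ₗ (G2 ∘ₗ G1)) =
          Submodule.map (T1 ∘ₗ T2) Bb.dualCoannihilator := by
        apply le_antisymm
        · rintro x ⟨f, rfl⟩
          exact Submodule.mem_map_of_mem (memB' f)
        · rintro x ⟨w, hw, rfl⟩
          refine ⟨(T1 ∘ₗ T2) w, ?_⟩
          simpa using congrArg (T1 ∘ₗ T2) (hBcle w hw)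
      have kerP : LinearMap.ker ((T1 ∘ₗ T2) ∘ₗ (G2 ∘ₗ G1)) = Ee := by
        apply le_antisymm
        · intro f hf
          have hf' : T1 (Q2 (G1 f)) = 0 := by
            have : T1 (T2 (G2 (G1 f))) = 0 := hf
            rwa [(hG2 _).2] at this
          have hv := (hG1 f).1
          have hb := key (G1 f) hv
          have hbE2 : G1 (T1 (G1 f - Q2 (G1 f))) ∈ E2 := by
            rw [← hQ2ker]; exact hb
          have hbB1 : G1 (T1 (G1 f - Q2 (G1 f))) ∈ B1.dualCoannihilator := (hG1 _).1
          have hTb : T1 (G1 (T1 (G1 f - Q2 (G1 f)))) = Q1 (T1 (G1 f - Q2 (G1 f))) := (hG1 _).2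
          have hQ1fval : Q1 f = T1 (G1 f - Q2 (G1 f)) := by
            rw [map_sub, ← (hG1 f).2, hf', sub_zero]
          rw [hEe]
          refine Submodule.mem_sup.2 ⟨(f - Q1 f) +
            (T1 (G1 f - Q2 (G1 f)) - Q1 (T1 (G1 f - Q2 (G1 f)))), ?_,
            T1 (G1 (T1 (G1 f - Q2 (G1 f)))), ?_, ?_⟩
          · refine Submodule.add_mem _ ?_ ?_
            · rw [← hQ1ker]
              rw [LinearMap.mem_ker, map_sub, hQ1f, sub_self]
            · rw [← hQ1ker]
              rw [LinearMap.mem_ker, map_sub, hQ1f, sub_self]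
          · exact Submodule.mem_map_of_mem ⟨hbB1, hbE2⟩
          · rw [hTb, ← hQ1fval]
            abel
        · rw [hEe]
          apply sup_le
          · intro e1 he1
            have : G1 e1 = 0 := hG1E1 e1 he1
            show T1 (T2 (G2 (G1 e1))) = 0
            rw [this, map_zero, map_zero, map_zero]
          · rintro x ⟨a, ⟨haB, haE⟩, rfl⟩
            show T1 (T2 (G2 (G1 (T1 a)))) = 0
            have hQ2a : Q2 a = 0 := by rw [← hQ2ker] at haE; exact haE
            rw [hG1T1 a haB, (hG2 a).2, hQ2a, map_zero]
      rw [← rangeP, ← kerP]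
      constructor
      · rw [Submodule.disjoint_def]
        rintro x ⟨y, rfl⟩ hx2
        rw [LinearMap.mem_ker] at hx2
        have h := LinearMap.congr_fun hO y
        simp only [LinearMap.comp_apply] at h hx2 ⊢
        rw [h] at hx2
        exact hx2
      · rw [codisjoint_iff, eq_top_iff]
        intro f _
        refine Submodule.mem_sup.2 ⟨((T1 ∘ₗ T2) ∘ₗ (G2 ∘ₗ G1)) f, ⟨f, rfl⟩,
          f - ((T1 ∘ₗ T2) ∘ₗ (G2 ∘ₗ G1)) f, ?_, by abel⟩
        rw [LinearMap.mem_ker, map_sub]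
        have h := LinearMap.congr_fun hO f
        simp only [LinearMap.comp_apply] at h ⊢
        rw [h, sub_self]
    · -- Green's operator characterization
      intro Q hQQ hQr hQk f
      refine ⟨by simpa using memB' f, ?_⟩
      have hfQ : f - Q f ∈ LinearMap.ker Q := by
        have hqq := LinearMap.congr_fun hQQ f
        simp only [LinearMap.comp_apply] at hqq
        rw [LinearMap.mem_ker, map_sub, hqq, sub_self]
      have hPker : ((T1 ∘ₗ T2) ∘ₗ (G2 ∘ₗ G1)) (f - Q f) = 0 := by
        rw [hQk, hEe] at hfQ
        revert hfQ
        generalize f - Q f = g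
        intro hg
        rcases Submodule.mem_sup.1 hg with ⟨e1, he1, x, hx, rfl⟩
        rcases hx with ⟨a, ⟨haB, haE⟩, rfl⟩
        have h1' : G1 e1 = 0 := hG1E1 e1 he1
        have hQ2a : Q2 a = 0 := by rw [← hQ2ker] at haE; exact haE
        show T1 (T2 (G2 (G1 (e1 + T1 a)))) = 0
        rw [map_add, h1', zero_add, hG1T1 a haB, (hG2 a).2, hQ2a, map_zero]
      have hQfmem : Q f ∈ Submodule.map (T1 ∘ₗ T2) Bb.dualCoannihilator := by
        rw [← hQr]; exact ⟨f, rfl⟩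
      rcases hQfmem with ⟨w, hw, hww⟩
      have hPQf : ((T1 ∘ₗ T2) ∘ₗ (G2 ∘ₗ G1)) (Q f) = Q f := by
        rw [← hww]
        show T1 (T2 (G2 (G1 (T1 (T2 w))))) = T1 (T2 w)
        rw [hBcle w hw]
      have : ((T1 ∘ₗ T2) ∘ₗ (G2 ∘ₗ G1)) f = Q f := by
        have hsplit : ((T1 ∘ₗ T2) ∘ₗ (G2 ∘ₗ G1)) f =
            ((T1 ∘ₗ T2) ∘ₗ (G2 ∘ₗ G1)) (Q f) + ((T1 ∘ₗ T2) ∘ₗ (G2 ∘ₗ G1)) (f - Q f) := by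
          rw [← map_add]
          congr 1
          abel
        rw [hsplit, hPker, add_zero, hPQf]
      simpa using this
  · -- backward
    rintro ⟨h1, h2, h3⟩
    set M1 := Submodule.map (T1 ∘ₗ T2) Bb.dualCoannihilator with hM1
    set Q : W →ₗ[K] W := M1.subtype ∘ₗ Submodule.projectionOnto M1 Ee h2 with hQdef
    have hQQ : Q ∘ₗ Q = Q := by
      ext f
      simp [hQdef, Submodule.projectionOnto_apply_left h2]
    have hQr : LinearMap.range Q = M1 := by
      rw [hQdef, LinearMap.range_comp, Submodule.range_projectionOnto,
        Submodule.map_top, Submodule.range_subtype]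
    have hQk : LinearMap.ker Q = Ee := by
      rw [hQdef, LinearMap.ker_comp, Submodule.ker_subtype, Submodule.comap_bot,
        Submodule.ker_projectionOnto]
    have hg := h3 Q hQQ hQr hQk
    ext f
    simp only [LinearMap.comp_apply]
    have e1 : (T1 ∘ₗ T2) ((G2 ∘ₗ G1) f) = Q f := (hg f).2
    have e2 : (T1 ∘ₗ T2) ((G2 ∘ₗ G1) (Q f)) = Q (Q f) := (hg (Q f)).2
    have e3 : Q (Q f) = Q f := by
      have hqq := LinearMap.congr_fun hQQ f
      simpa using hqq
    have hd : (G2 ∘ₗ G1) (Q f) - (G2 ∘ₗ G1) f = 0 := by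
      have hdk : (T1 ∘ₗ T2) ((G2 ∘ₗ G1) (Q f) - (G2 ∘ₗ G1) f) = 0 := by
        rw [map_sub, e1, e2, e3, sub_self]
      have hdB : (G2 ∘ₗ G1) (Q f) - (G2 ∘ₗ G1) f ∈ Bb.dualCoannihilator :=
        Submodule.sub_mem _ (hg (Q f)).1 (hg f).1
      have : (G2 ∘ₗ G1) (Q f) - (G2 ∘ₗ G1) f ∈
          LinearMap.ker (T1 ∘ₗ T2) ⊓ Bb.dualCoannihilator := ⟨hdk, hdB⟩
      rwa [h1, Submodule.mem_bot] at this
    have : G2 (G1 (T1 (T2 (G2 (G1 f))))) = (G2 ∘ₗ G1) (Q f) := by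
      simp only [LinearMap.comp_apply] at e1 ⊢
      rw [e1]
    rw [this]
    have := sub_eq_zero.mp hd
    simpa using this
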